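/- Let γ ∈ ℝ^{N−1} satisfy Mγ = 0. Then for all 1 ≤ i ≤ N−1: γ_i − Σ_{m=1}^{N−1} γ_m Σ_{j∈Ω} [(p_j/k_{m,j})·KB_i(a_{m,j}) − (p_j/k_{m+1,j})·KB_i(b_{m,j})] = 0. -/

import Mathlib

open Set

noncomputable section

/-- `T_ω = T_{ω_t} ∘ ⋯ ∘ T_{ω_1}` (head of the list applied first). -/
def rwordApply (T : ℕ → ℝ → ℝ) : List ℕ → ℝ → ℝ
  | [], y => y
  | j :: ω, y => rwordApply T ω (T j y)

/-- the weighted slope product `δ_ω(y,|ω|)`; `ι x` is the index of the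
partition interval containing `x`. -/
def rdelta (p : ℕ → ℝ) (k : ℕ → ℕ → ℝ) (ι : ℝ → ℕ) (T : ℕ → ℝ → ℝ) :
    List ℕ → ℝ → ℝ
  | [], _ => 1
  | j :: ω, y => p j / k (ι y) j * rdelta p k ι T ω (T j y)

/-- the random piecewise linear map with slopes `k`, intercepts `d`. -/
def Tpl (k d : ℕ → ℕ → ℝ) (ι : ℝ → ℕ) (j : ℕ) (x : ℝ) : ℝ :=
  k (ι x) j * x + d (ι x) j

/-- finite words with letters in `Ωs`. -/
def Words (Ωs : Set ℕ) : Type := {ω : List ℕ // ∀ j ∈ ω, j ∈ Ωs}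

/-- `KI_n(y) = Σ_{t≥1} Σ_{ω ∈ Ωᵗ} δ_ω(y,t)·1_{I_n}(T_{ω₁^{t-1}}(y))`. -/
def KI (Ωs : Set ℕ) (p : ℕ → ℝ) (k : ℕ → ℕ → ℝ) (ι : ℝ → ℕ) (T : ℕ → ℝ → ℝ)
    (n : ℕ) (y : ℝ) : ℝ :=
  ∑' ω : {ω : List ℕ // (∀ j ∈ ω, j ∈ Ωs) ∧ ω ≠ []},
    if ι (rwordApply T ω.1.dropLast y) = n then rdelta p k ι T ω.1 y else 0

/-- `KA_i(y) = Σ_{t≥0} Σ_{ω ∈ Ωᵗ} δ_ω(y,t)·1_{I_1 ∪ ⋯ ∪ I_i}(T_ω(y))`. -/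
def KA (Ωs : Set ℕ) (p : ℕ → ℝ) (k : ℕ → ℕ → ℝ) (ι : ℝ → ℕ) (T : ℕ → ℝ → ℝ)
    (i : ℕ) (y : ℝ) : ℝ :=
  ∑' ω : Words Ωs,
    if ι (rwordApply T ω.1 y) ≤ i then rdelta p k ι T ω.1 y else 0

/-- `KB_i(y) = Σ_{t≥0} Σ_{ω ∈ Ωᵗ} δ_ω(y,t)·1_{I_{i+1} ∪ ⋯ ∪ I_N}(T_ω(y))`. -/
def KB (Ωs : Set ℕ) (p : ℕ → ℝ) (k : ℕ → ℕ → ℝ) (ι : ℝ → ℕ) (T : ℕ → ℝ → ℝ)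
    (i : ℕ) (y : ℝ) : ℝ :=
  ∑' ω : Words Ωs,
    if i < ι (rwordApply T ω.1 y) then rdelta p k ι T ω.1 y else 0

/-- `S_n = Σ_{j∈Ω} p_j / k_{n,j}`, the average inverse slope on `I_n`. -/
def Sav (Ωs : Set ℕ) (p : ℕ → ℝ) (k : ℕ → ℕ → ℝ) (n : ℕ) : ℝ :=
  ∑' j : Ωs, p j.1 / k n j.1

/-- `a_{i,j} = k_{i,j} z_i + d_{i,j}`, the left limit of `T_j` at `z_i`. -/
def aPt (k d : ℕ → ℕ → ℝ) (z : ℕ → ℝ) (i j : ℕ) : ℝ := k i j * z i + d i j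

/-- `b_{i,j} = k_{i+1,j} z_i + d_{i+1,j}`, the right limit of `T_j` at `z_i`. -/
def bPt (k d : ℕ → ℕ → ℝ) (z : ℕ → ℝ) (i j : ℕ) : ℝ := k (i + 1) j * z i + d (i + 1) j

/-- the entries `μ_{n,i}` of the fundamental matrix (Definition 3.2). -/
def fundM (Ωs : Set ℕ) (p : ℕ → ℝ) (k d : ℕ → ℕ → ℝ) (ι : ℝ → ℕ) (z : ℕ → ℝ)
    (n i : ℕ) : ℝ :=
  ∑' j : Ωs,
    ((if n = i then p j.1 / k i j.1 else 0) -
      (if n = i + 1 then p j.1 / k (i + 1) j.1 else 0) +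
      (p j.1 / k i j.1 * KI Ωs p k ι (Tpl k d ι) n (aPt k d z i j.1) -
        p j.1 / k (i + 1) j.1 * KI Ωs p k ι (Tpl k d ι) n (bPt k d z i j.1)))

-- basic lemmas
lemma rword_nil (T : ℕ → ℝ → ℝ) (y : ℝ) : rwordApply T [] y = y := rfl

lemma rword_cons (T : ℕ → ℝ → ℝ) (j : ℕ) (ω : List ℕ) (y : ℝ) :
    rwordApply T (j :: ω) y = rwordApply T ω (T j y) := rfl

lemma rword_append (T : ℕ → ℝ → ℝ) (ω : List ℕ) (j : ℕ) (y : ℝ) :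
    rwordApply T (ω ++ [j]) y = T j (rwordApply T ω y) := by
  induction ω generalizing y with
  | nil => rfl
  | cons a ω ih => simp [rword_cons, ih]

lemma rdelta_nil (p : ℕ → ℝ) (k : ℕ → ℕ → ℝ) (ι : ℝ → ℕ) (T : ℕ → ℝ → ℝ) (y : ℝ) :
    rdelta p k ι T [] y = 1 := rfl

lemma rdelta_cons (p : ℕ → ℝ) (k : ℕ → ℕ → ℝ) (ι : ℝ → ℕ) (T : ℕ → ℝ → ℝ)
    (j : ℕ) (ω : List ℕ) (y : ℝ) :
    rdelta p k ι T (j :: ω) y = p j / k (ι y) j * rdelta p k ι T ω (T j y) := rfl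

lemma rdelta_append (p : ℕ → ℝ) (k : ℕ → ℕ → ℝ) (ι : ℝ → ℕ) (T : ℕ → ℝ → ℝ)
    (ω : List ℕ) (j : ℕ) (y : ℝ) :
    rdelta p k ι T (ω ++ [j]) y
      = rdelta p k ι T ω y * (p j / k (ι (rwordApply T ω y)) j) := by
  induction ω generalizing y with
  | nil => simp [rdelta_nil, rdelta_cons, rword_nil]
  | cons a ω ih => simp [rdelta_cons, rword_cons, ih]; ring

lemma rword_mem (Ωs : Set ℕ) (T : ℕ → ℝ → ℝ)
    (hT : ∀ j ∈ Ωs, ∀ x ∈ Icc (0:ℝ) 1, T j x ∈ Icc (0:ℝ) 1) :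
    ∀ (ω : List ℕ), (∀ j ∈ ω, j ∈ Ωs) → ∀ y ∈ Icc (0:ℝ) 1,
      rwordApply T ω y ∈ Icc (0:ℝ) 1 := by
  intro ω
  induction ω with
  | nil => intro _ y hy; exact hy
  | cons a ω ih =>
      intro hω y hy
      exact ih (fun j hj => hω j (List.mem_cons_of_mem _ hj))
        (T a y) (hT a (hω a List.mem_cons_self) y hy)

/-- auxiliary: sum over all words landing exactly in `I_n`. -/
def Pn (Ωs : Set ℕ) (p : ℕ → ℝ) (k : ℕ → ℕ → ℝ) (ι : ℝ → ℕ) (T : ℕ → ℝ → ℝ)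
    (n : ℕ) (y : ℝ) : ℝ :=
  ∑' ω : {ω : List ℕ // ∀ j ∈ ω, j ∈ Ωs},
    if ι (rwordApply T ω.1 y) = n then rdelta p k ι T ω.1 y else 0

-- Lemma A: uniform bound on finite sums of |rdelta|
lemma sum_abs_rdelta_le (Ωs : Set ℕ) (N : ℕ) (p : ℕ → ℝ) (ρ : ℝ)
    (k : ℕ → ℕ → ℝ) (ι : ℝ → ℕ) (T : ℕ → ℝ → ℝ)
    (hρ0 : 0 < ρ) (hρ1 : ρ < 1)
    (hp : ∀ j ∈ Ωs, 0 < p j)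
    (hι : ∀ x ∈ Icc (0:ℝ) 1, ι x ∈ Finset.Icc 1 N)
    (hT : ∀ j ∈ Ωs, ∀ x ∈ Icc (0:ℝ) 1, T j x ∈ Icc (0:ℝ) 1)
    (hA2 : ∀ n ∈ Finset.Icc 1 N,
      Summable (fun j : Ωs => p j.1 / |k n j.1|) ∧
        ∑' j : Ωs, p j.1 / |k n j.1| ≤ ρ) :
    ∀ (L : ℕ) (y : ℝ), y ∈ Icc (0:ℝ) 1 → ∀ S : Finset (List ℕ),
      (∀ ω ∈ S, (∀ j ∈ ω, j ∈ Ωs) ∧ ω.length ≤ L) →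
      ∑ ω ∈ S, |rdelta p k ι T ω y| ≤ (1 - ρ)⁻¹ := by
  classical
  have h1ρ : (0:ℝ) < 1 - ρ := by linarith
  have hinv : (1:ℝ) ≤ (1 - ρ)⁻¹ := by
    have h2 : (1 - ρ) * (1 - ρ)⁻¹ = 1 := mul_inv_cancel₀ h1ρ.ne'
    nlinarith [inv_pos.mpr h1ρ]
  have hone : ∀ (S : Finset (List ℕ)) (y : ℝ), S ⊆ {([] : List ℕ)} →
      ∑ ω ∈ S, |rdelta p k ι T ω y| ≤ 1 := by
    intro S y hsub
    calc ∑ ω ∈ S, |rdelta p k ι T ω y|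
        ≤ ∑ ω ∈ ({([] : List ℕ)} : Finset (List ℕ)), |rdelta p k ι T ω y| :=
          Finset.sum_le_sum_of_subset_of_nonneg hsub (fun _ _ _ => abs_nonneg _)
      _ = 1 := by simp [rdelta_nil]
  intro L
  induction L with
  | zero =>
      intro y hy S hS
      have hsub : S ⊆ {([] : List ℕ)} := by
        intro ω hω
        have := (hS ω hω).2
        simp only [Nat.le_zero, List.length_eq_zero_iff] at this
        simp [this]
      exact (hone S y hsub).trans hinv
  | succ L IH =>
      intro y hy S hS
      set f : List ℕ → ℝ := fun ω => |rdelta p k ι T ω y| with hf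
      have hsplit := Finset.sum_filter_add_sum_filter_not S (fun ω => ω = []) f
      set S0 := S.filter (fun ω => ω = []) with hS0
      set S1 := S.filter (fun ω => ¬ ω = []) with hS1
      have hS0le : ∑ ω ∈ S0, f ω ≤ 1 := by
        apply hone
        intro ω hω
        simp only [hS0, Finset.mem_filter] at hω
        simp [hω.2]
      -- the nonempty part
      have hS1mem : ∀ ω ∈ S1, ω ≠ [] ∧ (∀ j ∈ ω, j ∈ Ωs) ∧ ω.length ≤ L + 1 := by
        intro ω hω
        simp only [hS1, Finset.mem_filter] at hω
        exact ⟨hω.2, (hS ω hω.1).1, (hS ω hω.1).2⟩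
      set e : List ℕ → ℕ × List ℕ := fun ω => (ω.headI, ω.tail) with he
      have hinj : ∀ x ∈ S1, ∀ y ∈ S1, e x = e y → x = y := by
        intro a ha b hb hab
        obtain ⟨a1, a2, rfl⟩ := List.exists_cons_of_ne_nil (hS1mem a ha).1
        obtain ⟨b1, b2, rfl⟩ := List.exists_cons_of_ne_nil (hS1mem b hb).1
        simp only [he, List.headI, List.tail, Prod.mk.injEq] at hab
        simp [hab.1, hab.2]
      have h1 : ∑ ω ∈ S1, f ω = ∑ q ∈ S1.image e, f (q.1 :: q.2) := by
        rw [Finset.sum_image hinj]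
        apply Finset.sum_congr rfl
        intro ω hω
        obtain ⟨a1, a2, rfl⟩ := List.exists_cons_of_ne_nil (hS1mem ω hω).1
        rfl
      set J := S1.image List.headI with hJ
      set Tl := S1.image List.tail with hTl
      have hJΩ : ∀ j ∈ J, j ∈ Ωs := by
        intro j hj
        simp only [hJ, Finset.mem_image] at hj
        obtain ⟨ω, hω, rfl⟩ := hj
        obtain ⟨a1, a2, rfl⟩ := List.exists_cons_of_ne_nil (hS1mem ω hω).1
        exact (hS1mem _ hω).2.1 a1 List.mem_cons_self
      have hTlmem : ∀ ω ∈ Tl, (∀ j ∈ ω, j ∈ Ωs) ∧ ω.length ≤ L := by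
        intro ω hω
        simp only [hTl, Finset.mem_image] at hω
        obtain ⟨ω', hω', rfl⟩ := hω
        refine ⟨fun j hj => (hS1mem ω' hω').2.1 j (List.mem_of_mem_tail hj), ?_⟩
        have := (hS1mem ω' hω').2.2
        rw [List.length_tail]
        omega
      have h2 : S1.image e ⊆ J ×ˢ Tl := by
        intro q hq
        simp only [Finset.mem_image] at hq
        obtain ⟨ω, hω, rfl⟩ := hq
        rw [Finset.mem_product]
        exact ⟨Finset.mem_image_of_mem _ hω, Finset.mem_image_of_mem _ hω⟩
      have h3 : ∑ q ∈ S1.image e, f (q.1 :: q.2) ≤ ∑ q ∈ J ×ˢ Tl, f (q.1 :: q.2) :=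
        Finset.sum_le_sum_of_subset_of_nonneg h2 (fun _ _ _ => abs_nonneg _)
      have hn : ι y ∈ Finset.Icc 1 N := hι y hy
      have hJρ : ∑ j ∈ J, p j / |k (ι y) j| ≤ ρ := by
        set emb : {x // x ∈ J} ↪ ↥Ωs :=
          ⟨fun x => ⟨x.1, hJΩ x.1 x.2⟩, fun a b hab => Subtype.ext (by
            simpa using congrArg Subtype.val hab)⟩ with hemb
        have := Summable.sum_le_tsum (J.attach.map emb)
          (fun i _ => div_nonneg (hp i.1 i.2).le (abs_nonneg _)) (hA2 (ι y) hn).1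
        rw [Finset.sum_map] at this
        rw [← Finset.sum_attach J (fun j => p j / |k (ι y) j|)]
        exact le_trans (le_of_eq (Finset.sum_congr rfl fun x _ => rfl)) 
          (this.trans (hA2 (ι y) hn).2)
      have h4 : ∑ q ∈ J ×ˢ Tl, f (q.1 :: q.2) ≤ ρ * (1 - ρ)⁻¹ := by
        rw [Finset.sum_product]
        have hint : ∀ j ∈ J, ∑ ω ∈ Tl, f (j :: ω) ≤ p j / |k (ι y) j| * (1 - ρ)⁻¹ := by
          intro j hj
          have hTy : T j y ∈ Icc (0:ℝ) 1 := hT j (hJΩ j hj) y hy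
          have hIH := IH (T j y) hTy Tl hTlmem
          have heq : ∀ ω : List ℕ, f (j :: ω) =
              p j / |k (ι y) j| * |rdelta p k ι T ω (T j y)| := by
            intro ω
            simp only [hf, rdelta_cons, abs_mul, abs_div,
              abs_of_pos (hp j (hJΩ j hj))]
          rw [Finset.sum_congr rfl (fun ω _ => heq ω), ← Finset.mul_sum]
          exact mul_le_mul_of_nonneg_left hIH
            (div_nonneg (hp j (hJΩ j hj)).le (abs_nonneg _))
        calc ∑ j ∈ J, ∑ ω ∈ Tl, f (j :: ω)
            ≤ ∑ j ∈ J, p j / |k (ι y) j| * (1 - ρ)⁻¹ := Finset.sum_le_sum hint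
          _ = (∑ j ∈ J, p j / |k (ι y) j|) * (1 - ρ)⁻¹ := by rw [Finset.sum_mul]
          _ ≤ ρ * (1 - ρ)⁻¹ := by
              apply mul_le_mul_of_nonneg_right hJρ (inv_pos.mpr h1ρ).le
      have hfinal : 1 + ρ * (1 - ρ)⁻¹ = (1 - ρ)⁻¹ := by
        field_simp
        ring
      calc ∑ ω ∈ S, f ω = ∑ ω ∈ S0, f ω + ∑ ω ∈ S1, f ω := hsplit.symm
        _ ≤ 1 + ρ * (1 - ρ)⁻¹ := by
            apply add_le_add hS0le
            rw [h1]; exact h3.trans h4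
        _ = (1 - ρ)⁻¹ := hfinal

-- Summability over words, and domination
lemma summable_abs_rdelta (Ωs : Set ℕ) (N : ℕ) (p : ℕ → ℝ) (ρ : ℝ)
    (k : ℕ → ℕ → ℝ) (ι : ℝ → ℕ) (T : ℕ → ℝ → ℝ)
    (hρ0 : 0 < ρ) (hρ1 : ρ < 1)
    (hp : ∀ j ∈ Ωs, 0 < p j)
    (hι : ∀ x ∈ Icc (0:ℝ) 1, ι x ∈ Finset.Icc 1 N)
    (hT : ∀ j ∈ Ωs, ∀ x ∈ Icc (0:ℝ) 1, T j x ∈ Icc (0:ℝ) 1)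
    (hA2 : ∀ n ∈ Finset.Icc 1 N,
      Summable (fun j : Ωs => p j.1 / |k n j.1|) ∧
        ∑' j : Ωs, p j.1 / |k n j.1| ≤ ρ)
    (P : List ℕ → Prop) (hP : ∀ ω, P ω → ∀ j ∈ ω, j ∈ Ωs)
    (y : ℝ) (hy : y ∈ Icc (0:ℝ) 1) :
    Summable (fun ω : {ω : List ℕ // P ω} => |rdelta p k ι T ω.1 y|) ∧
      ∑' ω : {ω : List ℕ // P ω}, |rdelta p k ι T ω.1 y| ≤ (1 - ρ)⁻¹ := by
  classical
  have hb : ∀ u : Finset {ω : List ℕ // P ω},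
      ∑ ω ∈ u, |rdelta p k ι T ω.1 y| ≤ (1 - ρ)⁻¹ := by
    intro u
    set S : Finset (List ℕ) := u.image Subtype.val with hS
    have hinj : ∀ x ∈ u, ∀ z ∈ u, x.1 = z.1 → x = z := fun x _ z _ h => Subtype.ext h
    have h1 : ∑ ω ∈ S, |rdelta p k ι T ω y| = ∑ ω ∈ u, |rdelta p k ι T ω.1 y| :=
      Finset.sum_image hinj
    rw [← h1]
    apply sum_abs_rdelta_le Ωs N p ρ k ι T hρ0 hρ1 hp hι hT hA2 (S.sup List.length) y hy
    intro ω hω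
    refine ⟨?_, Finset.le_sup hω⟩
    simp only [hS, Finset.mem_image] at hω
    obtain ⟨ω', _, rfl⟩ := hω
    exact hP ω'.1 ω'.2
  have hsumm : Summable (fun ω : {ω : List ℕ // P ω} => |rdelta p k ι T ω.1 y|) :=
    summable_of_sum_le (fun ω => abs_nonneg _) hb
  exact ⟨hsumm, Summable.tsum_le_of_sum_le hsumm hb⟩

lemma summable_dominated (Ωs : Set ℕ) (N : ℕ) (p : ℕ → ℝ) (ρ : ℝ)
    (k : ℕ → ℕ → ℝ) (ι : ℝ → ℕ) (T : ℕ → ℝ → ℝ)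
    (hρ0 : 0 < ρ) (hρ1 : ρ < 1)
    (hp : ∀ j ∈ Ωs, 0 < p j)
    (hι : ∀ x ∈ Icc (0:ℝ) 1, ι x ∈ Finset.Icc 1 N)
    (hT : ∀ j ∈ Ωs, ∀ x ∈ Icc (0:ℝ) 1, T j x ∈ Icc (0:ℝ) 1)
    (hA2 : ∀ n ∈ Finset.Icc 1 N,
      Summable (fun j : Ωs => p j.1 / |k n j.1|) ∧
        ∑' j : Ωs, p j.1 / |k n j.1| ≤ ρ)
    (P : List ℕ → Prop) (hP : ∀ ω, P ω → ∀ j ∈ ω, j ∈ Ωs)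
    (y : ℝ) (hy : y ∈ Icc (0:ℝ) 1)
    (g : {ω : List ℕ // P ω} → ℝ)
    (hg : ∀ ω, |g ω| ≤ |rdelta p k ι T ω.1 y|) :
    Summable g ∧ |∑' ω, g ω| ≤ (1 - ρ)⁻¹ := by
  obtain ⟨hs, hbd⟩ := summable_abs_rdelta Ωs N p ρ k ι T hρ0 hρ1 hp hι hT hA2 P hP y hy
  have hgs : Summable (fun ω => |g ω|) :=
    Summable.of_nonneg_of_le (fun _ => abs_nonneg _) hg hs
  have hgsum : Summable g := Summable.of_abs hgs
  refine ⟨hgsum, ?_⟩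
  have h1 : |∑' ω, g ω| ≤ ∑' ω, |g ω| := by
    have := norm_tsum_le_tsum_norm (f := g) (by simpa [Real.norm_eq_abs] using hgs)
    simpa [Real.norm_eq_abs] using this
  exact h1.trans ((Summable.tsum_le_tsum hg hgs hs).trans hbd)

section Keys

variable (Ωs : Set ℕ) (N : ℕ) (p : ℕ → ℝ) (ρ : ℝ)
  (k : ℕ → ℕ → ℝ) (ι : ℝ → ℕ) (T : ℕ → ℝ → ℝ)

/-- the last-letter splitting equivalence. -/
def lastEquiv : ({ω : List ℕ // ∀ j ∈ ω, j ∈ Ωs} × ↥Ωs) ≃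
    {ω : List ℕ // (∀ j ∈ ω, j ∈ Ωs) ∧ ω ≠ []} where
  toFun q := ⟨q.1.1 ++ [q.2.1], by
    constructor
    · intro j hj
      rcases List.mem_append.mp hj with h | h
      · exact q.1.2 j h
      · rw [List.mem_singleton.mp h]; exact q.2.2
    · simp⟩
  invFun ω := (⟨ω.1.dropLast, fun j hj => ω.2.1 j (List.dropLast_subset ω.1 hj)⟩,
    ⟨ω.1.getLast ω.2.2, ω.2.1 _ (List.getLast_mem ω.2.2)⟩)
  left_inv q := by
    refine Prod.ext (Subtype.ext ?_) (Subtype.ext ?_) <;>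
      simp [List.dropLast_concat, List.getLast_concat]
  right_inv ω := Subtype.ext (List.dropLast_append_getLast ω.2.2)

variable {Ωs N p ρ k ι T}

theorem KI_eq
    (hρ0 : 0 < ρ) (hρ1 : ρ < 1)
    (hp : ∀ j ∈ Ωs, 0 < p j)
    (hι : ∀ x ∈ Icc (0:ℝ) 1, ι x ∈ Finset.Icc 1 N)
    (hT : ∀ j ∈ Ωs, ∀ x ∈ Icc (0:ℝ) 1, T j x ∈ Icc (0:ℝ) 1)
    (hA2 : ∀ n ∈ Finset.Icc 1 N,
      Summable (fun j : Ωs => p j.1 / |k n j.1|) ∧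
        ∑' j : Ωs, p j.1 / |k n j.1| ≤ ρ)
    (n : ℕ) (hn : n ∈ Finset.Icc 1 N) (y : ℝ) (hy : y ∈ Icc (0:ℝ) 1) :
    KI Ωs p k ι T n y = Sav Ωs p k n * Pn Ωs p k ι T n y := by
  classical
  rw [KI, ← (lastEquiv Ωs).tsum_eq]
  have hpt : ∀ q : ({ω : List ℕ // ∀ j ∈ ω, j ∈ Ωs} × ↥Ωs),
      (if ι (rwordApply T ((lastEquiv Ωs) q).1.dropLast y) = n
        then rdelta p k ι T ((lastEquiv Ωs) q).1 y else 0)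
      = (if ι (rwordApply T q.1.1 y) = n then rdelta p k ι T q.1.1 y else 0)
          * (p q.2.1 / k n q.2.1) := by
    rintro ⟨ω', j⟩
    have hval : ((lastEquiv Ωs) (ω', j)).1 = ω'.1 ++ [j.1] := rfl
    rw [hval, List.dropLast_concat, rdelta_append]
    by_cases hc : ι (rwordApply T ω'.1 y) = n
    · rw [if_pos hc, if_pos hc, hc]
    · rw [if_neg hc, if_neg hc, zero_mul]
  rw [tsum_congr hpt]
  have hsummA : Summable (fun ω' : {ω : List ℕ // ∀ j ∈ ω, j ∈ Ωs} =>
      ‖if ι (rwordApply T ω'.1 y) = n then rdelta p k ι T ω'.1 y else 0‖) := by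
    have := (summable_abs_rdelta Ωs N p ρ k ι T hρ0 hρ1 hp hι hT hA2
      (fun ω => ∀ j ∈ ω, j ∈ Ωs) (fun _ h => h) y hy).1
    apply Summable.of_nonneg_of_le (fun _ => norm_nonneg _) _ this
    intro ω'
    rw [Real.norm_eq_abs]
    split
    · exact le_refl _
    · simp [abs_nonneg]
  have hsummB : Summable (fun j : Ωs => ‖p j.1 / k n j.1‖) := by
    have := (hA2 n hn).1
    apply Summable.of_nonneg_of_le (fun _ => norm_nonneg _) _ this
    intro j
    rw [Real.norm_eq_abs, abs_div, abs_of_pos (hp j.1 j.2)]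
  rw [← tsum_mul_tsum_of_summable_norm hsummA hsummB]
  rw [mul_comm]
  rfl

theorem KB_eq
    (hρ0 : 0 < ρ) (hρ1 : ρ < 1)
    (hp : ∀ j ∈ Ωs, 0 < p j)
    (hι : ∀ x ∈ Icc (0:ℝ) 1, ι x ∈ Finset.Icc 1 N)
    (hT : ∀ j ∈ Ωs, ∀ x ∈ Icc (0:ℝ) 1, T j x ∈ Icc (0:ℝ) 1)
    (hA2 : ∀ n ∈ Finset.Icc 1 N,
      Summable (fun j : Ωs => p j.1 / |k n j.1|) ∧
        ∑' j : Ωs, p j.1 / |k n j.1| ≤ ρ)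
    (i : ℕ) (y : ℝ) (hy : y ∈ Icc (0:ℝ) 1) :
    KB Ωs p k ι T i y = ∑ n ∈ Finset.Icc (i+1) N, Pn Ωs p k ι T n y := by
  classical
  rw [KB]
  have hpt : ∀ ω : {ω : List ℕ // ∀ j ∈ ω, j ∈ Ωs},
      (if i < ι (rwordApply T ω.1 y) then rdelta p k ι T ω.1 y else 0)
      = ∑ n ∈ Finset.Icc (i+1) N,
          (if ι (rwordApply T ω.1 y) = n then rdelta p k ι T ω.1 y else 0) := by
    intro ω
    rw [Finset.sum_ite_eq (Finset.Icc (i+1) N) (ι (rwordApply T ω.1 y))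
      (fun _ => rdelta p k ι T ω.1 y)]
    have hmem : ι (rwordApply T ω.1 y) ∈ Finset.Icc 1 N :=
      hι _ (rword_mem Ωs T hT ω.1 ω.2 y hy)
    rw [Finset.mem_Icc] at hmem
    congr 1
    rw [Finset.mem_Icc]
    simp only [eq_iff_iff]
    omega
  have hcong : KB Ωs p k ι T i y = ∑' ω : {ω : List ℕ // ∀ j ∈ ω, j ∈ Ωs},
      ∑ n ∈ Finset.Icc (i+1) N,
        (if ι (rwordApply T ω.1 y) = n then rdelta p k ι T ω.1 y else 0) := by
    rw [KB]
    exact tsum_congr hpt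
  rw [← KB, hcong, Summable.tsum_finsetSum]
  · rfl
  · intro n _
    exact (summable_dominated Ωs N p ρ k ι T hρ0 hρ1 hp hι hT hA2
      (fun ω => ∀ j ∈ ω, j ∈ Ωs) (fun _ h => h) y hy _
      (fun ω => by split <;> simp [abs_nonneg])).1

end Keys

section Bounds

variable {Ωs : Set ℕ} {N : ℕ} {p : ℕ → ℝ} {ρ : ℝ}
  {k : ℕ → ℕ → ℝ} {ι : ℝ → ℕ} {T : ℕ → ℝ → ℝ}

theorem KI_bound
    (hρ0 : 0 < ρ) (hρ1 : ρ < 1)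
    (hp : ∀ j ∈ Ωs, 0 < p j)
    (hι : ∀ x ∈ Icc (0:ℝ) 1, ι x ∈ Finset.Icc 1 N)
    (hT : ∀ j ∈ Ωs, ∀ x ∈ Icc (0:ℝ) 1, T j x ∈ Icc (0:ℝ) 1)
    (hA2 : ∀ n ∈ Finset.Icc 1 N,
      Summable (fun j : Ωs => p j.1 / |k n j.1|) ∧
        ∑' j : Ωs, p j.1 / |k n j.1| ≤ ρ)
    (n : ℕ) (y : ℝ) (hy : y ∈ Icc (0:ℝ) 1) :
    |KI Ωs p k ι T n y| ≤ (1 - ρ)⁻¹ :=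
  (summable_dominated Ωs N p ρ k ι T hρ0 hρ1 hp hι hT hA2
    (fun ω => (∀ j ∈ ω, j ∈ Ωs) ∧ ω ≠ []) (fun _ h => h.1) y hy _
    (fun ω => by split <;> simp [abs_nonneg])).2

theorem KB_bound
    (hρ0 : 0 < ρ) (hρ1 : ρ < 1)
    (hp : ∀ j ∈ Ωs, 0 < p j)
    (hι : ∀ x ∈ Icc (0:ℝ) 1, ι x ∈ Finset.Icc 1 N)
    (hT : ∀ j ∈ Ωs, ∀ x ∈ Icc (0:ℝ) 1, T j x ∈ Icc (0:ℝ) 1)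
    (hA2 : ∀ n ∈ Finset.Icc 1 N,
      Summable (fun j : Ωs => p j.1 / |k n j.1|) ∧
        ∑' j : Ωs, p j.1 / |k n j.1| ≤ ρ)
    (i : ℕ) (y : ℝ) (hy : y ∈ Icc (0:ℝ) 1) :
    |KB Ωs p k ι T i y| ≤ (1 - ρ)⁻¹ :=
  (summable_dominated Ωs N p ρ k ι T hρ0 hρ1 hp hι hT hA2
    (fun ω => ∀ j ∈ ω, j ∈ Ωs) (fun _ h => h) y hy _
    (fun ω => by split <;> simp [abs_nonneg])).2

end Bounds

set_option maxHeartbeats 2000000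

/-- if `Mγ = 0` for the fundamental matrix `M`, then for all
`1 ≤ i ≤ N-1`:
`γ_i − Σ_m γ_m Σ_j [(p_j/k_{m,j}) KB_i(a_{m,j}) − (p_j/k_{m+1,j}) KB_i(b_{m,j})] = 0`. -/
theorem stmt_9 (Ωs : Set ℕ) (N : ℕ) (hN : 2 ≤ N) (p : ℕ → ℝ) (ρ : ℝ)
    (hρ0 : 0 < ρ) (hρ1 : ρ < 1)
    (hp : ∀ j ∈ Ωs, 0 < p j) (hpsum : HasSum (fun j : Ωs => p j.1) 1)
    (k d : ℕ → ℕ → ℝ) (ι : ℝ → ℕ) (z : ℕ → ℝ)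
    (hι : ∀ x ∈ Icc (0:ℝ) 1, ι x ∈ Finset.Icc 1 N)
    (hk : ∀ n ∈ Finset.Icc 1 N, ∀ j ∈ Ωs, k n j ≠ 0)
    (hT : ∀ j ∈ Ωs, ∀ x ∈ Icc (0:ℝ) 1, Tpl k d ι j x ∈ Icc (0:ℝ) 1)
    (hA2 : ∀ n ∈ Finset.Icc 1 N,
      Summable (fun j : Ωs => p j.1 / |k n j.1|) ∧
        ∑' j : Ωs, p j.1 / |k n j.1| ≤ ρ)
    (hS : ∀ n ∈ Finset.Icc 1 N, Sav Ωs p k n ≠ 0)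
    (hz : ∀ i ∈ Finset.Icc 1 (N - 1), z i ∈ Icc (0:ℝ) 1)
    (hab : ∀ i ∈ Finset.Icc 1 (N - 1), ∀ j ∈ Ωs,
      aPt k d z i j ∈ Icc (0:ℝ) 1 ∧ bPt k d z i j ∈ Icc (0:ℝ) 1)
    (γ : ℕ → ℝ)
    (hγ : ∀ n ∈ Finset.Icc 1 N,
      ∑ m ∈ Finset.Icc 1 (N - 1), fundM Ωs p k d ι z n m * γ m = 0) :
    ∀ i ∈ Finset.Icc 1 (N - 1),
      γ i - ∑ m ∈ Finset.Icc 1 (N - 1), γ m *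
        ∑' j : Ωs,
          (p j.1 / k m j.1 * KB Ωs p k ι (Tpl k d ι) i (aPt k d z m j.1) -
            p j.1 / k (m + 1) j.1 * KB Ωs p k ι (Tpl k d ι) i (bPt k d z m j.1)) = 0 := by
  classical
  intro i hi
  have hi' := Finset.mem_Icc.mp hi
  set T := Tpl k d ι with hTdef
  set s := Finset.Icc (i + 1) N with hs
  set t := Finset.Icc 1 (N - 1) with ht
  have hsub : ∀ n ∈ s, n ∈ Finset.Icc 1 N := by
    intro n hn; rw [hs, Finset.mem_Icc] at hn; rw [Finset.mem_Icc]; omega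
  have hmN : ∀ m ∈ t, m ∈ Finset.Icc 1 N := by
    intro m hm; rw [ht, Finset.mem_Icc] at hm; rw [Finset.mem_Icc]; omega
  have hm1N : ∀ m ∈ t, m + 1 ∈ Finset.Icc 1 N := by
    intro m hm; rw [ht, Finset.mem_Icc] at hm; rw [Finset.mem_Icc]; omega
  -- summability of the inverse-slope series
  have hsumk : ∀ n ∈ Finset.Icc 1 N, Summable (fun j : Ωs => p j.1 / k n j.1) := by
    intro n hn
    apply Summable.of_abs
    apply Summable.of_nonneg_of_le (fun _ => abs_nonneg _) _ (hA2 n hn).1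
    intro j
    rw [abs_div, abs_of_pos (hp j.1 j.2)]
  -- bound constant
  have hc0 : (0:ℝ) ≤ (1 - ρ)⁻¹ := (inv_pos.mpr (by linarith)).le
  -- summability of products with KI / KB factors
  have hprod : ∀ (n' : ℕ), n' ∈ Finset.Icc 1 N → ∀ (g : ℕ → ℝ),
      (∀ j ∈ Ωs, |g j| ≤ (1 - ρ)⁻¹) →
      Summable (fun j : Ωs => p j.1 / k n' j.1 * g j.1) := by
    intro n' hn' g hg
    apply Summable.of_abs
    apply Summable.of_nonneg_of_le (fun _ => abs_nonneg _) _ ((hA2 n' hn').1.mul_right ((1-ρ)⁻¹))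
    intro j
    rw [abs_mul, abs_div, abs_of_pos (hp j.1 j.2)]
    exact mul_le_mul_of_nonneg_left (hg j.1 j.2)
      (div_nonneg (hp j.1 j.2).le (abs_nonneg _))
  -- the Q m quantity
  set Q : ℕ → ℝ := fun m => ∑' j : Ωs,
      (p j.1 / k m j.1 * KB Ωs p k ι T i (aPt k d z m j.1) -
        p j.1 / k (m + 1) j.1 * KB Ωs p k ι T i (bPt k d z m j.1)) with hQ
  -- Step 3 : the column sums
  have step3 : ∀ m ∈ t, ∑ n ∈ s, (Sav Ωs p k n)⁻¹ * fundM Ωs p k d ι z n m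
      = (if m = i then (-1 : ℝ) else 0) + Q m := by
    intro m hm
    have hmt := Finset.mem_Icc.mp hm
    have haI : ∀ j ∈ Ωs, aPt k d z m j ∈ Icc (0:ℝ) 1 := fun j hj => (hab m hm j hj).1
    have hbI : ∀ j ∈ Ωs, bPt k d z m j ∈ Icc (0:ℝ) 1 := fun j hj => (hab m hm j hj).2
    -- summability of columns of F
    have hFn : ∀ n, Summable (fun j : Ωs =>
        ((if n = m then p j.1 / k m j.1 else 0) -
          (if n = m + 1 then p j.1 / k (m + 1) j.1 else 0) +
          (p j.1 / k m j.1 * KI Ωs p k ι T n (aPt k d z m j.1) -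
            p j.1 / k (m + 1) j.1 * KI Ωs p k ι T n (bPt k d z m j.1)))) := by
      intro n
      apply Summable.add
      · apply Summable.sub
        · by_cases h : n = m
          · simpa [h] using hsumk m (hmN m hm)
          · simp [h, summable_zero]
        · by_cases h : n = m + 1
          · simpa [h] using hsumk (m+1) (hm1N m hm)
          · simp [h, summable_zero]
      · apply Summable.sub
        · exact hprod m (hmN m hm) _ (fun j hj =>
            KI_bound hρ0 hρ1 hp hι hT hA2 n _ (haI j hj))
        · exact hprod (m+1) (hm1N m hm) _ (fun j hj =>
            KI_bound hρ0 hρ1 hp hι hT hA2 n _ (hbI j hj))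
    -- rewrite each term as a tsum and swap
    have h1 : ∀ n ∈ s, (Sav Ωs p k n)⁻¹ * fundM Ωs p k d ι z n m
        = ∑' j : Ωs, (Sav Ωs p k n)⁻¹ *
            ((if n = m then p j.1 / k m j.1 else 0) -
              (if n = m + 1 then p j.1 / k (m + 1) j.1 else 0) +
              (p j.1 / k m j.1 * KI Ωs p k ι T n (aPt k d z m j.1) -
                p j.1 / k (m + 1) j.1 * KI Ωs p k ι T n (bPt k d z m j.1))) := by
      intro n _
      rw [fundM, tsum_mul_left]
    rw [Finset.sum_congr rfl h1, ← Summable.tsum_finsetSum (fun n _ => (hFn n).mul_left _)]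
    -- evaluate the inner (finite) sums
    have hKIKB : ∀ y ∈ Icc (0:ℝ) 1,
        ∑ n ∈ s, (Sav Ωs p k n)⁻¹ * KI Ωs p k ι T n y = KB Ωs p k ι T i y := by
      intro y hy
      rw [KB_eq hρ0 hρ1 hp hι hT hA2 i y hy]
      refine Finset.sum_congr rfl fun n hn => ?_
      rw [KI_eq hρ0 hρ1 hp hι hT hA2 n (hsub n hn) y hy, ← mul_assoc,
        inv_mul_cancel₀ (hS n (hsub n hn)), one_mul]
    have hms : m ∈ s ↔ i < m := by
      rw [hs, Finset.mem_Icc]; omega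
    have hm1s : m + 1 ∈ s ↔ i ≤ m := by
      rw [hs, Finset.mem_Icc]; omega
    have hinner : ∀ j : Ωs, ∑ n ∈ s, (Sav Ωs p k n)⁻¹ *
        ((if n = m then p j.1 / k m j.1 else 0) -
          (if n = m + 1 then p j.1 / k (m + 1) j.1 else 0) +
          (p j.1 / k m j.1 * KI Ωs p k ι T n (aPt k d z m j.1) -
            p j.1 / k (m + 1) j.1 * KI Ωs p k ι T n (bPt k d z m j.1)))
        = (if i < m then (Sav Ωs p k m)⁻¹ * (p j.1 / k m j.1) else 0) -
          (if i ≤ m then (Sav Ωs p k (m+1))⁻¹ * (p j.1 / k (m+1) j.1) else 0) +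
          (p j.1 / k m j.1 * KB Ωs p k ι T i (aPt k d z m j.1) -
            p j.1 / k (m + 1) j.1 * KB Ωs p k ι T i (bPt k d z m j.1)) := by
      intro j
      have expand : ∀ n ∈ s, (Sav Ωs p k n)⁻¹ *
          ((if n = m then p j.1 / k m j.1 else 0) -
            (if n = m + 1 then p j.1 / k (m + 1) j.1 else 0) +
            (p j.1 / k m j.1 * KI Ωs p k ι T n (aPt k d z m j.1) -
              p j.1 / k (m + 1) j.1 * KI Ωs p k ι T n (bPt k d z m j.1)))
          = (if n = m then (Sav Ωs p k n)⁻¹ * (p j.1 / k m j.1) else 0) -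
            (if n = m + 1 then (Sav Ωs p k n)⁻¹ * (p j.1 / k (m+1) j.1) else 0) +
            (p j.1 / k m j.1 * ((Sav Ωs p k n)⁻¹ * KI Ωs p k ι T n (aPt k d z m j.1)) -
              p j.1 / k (m + 1) j.1 * ((Sav Ωs p k n)⁻¹ * KI Ωs p k ι T n (bPt k d z m j.1))) := by
        intro n _
        split_ifs with h1' h2' <;> ring
      rw [Finset.sum_congr rfl expand]
      rw [Finset.sum_add_distrib, Finset.sum_sub_distrib, Finset.sum_sub_distrib,
        ← Finset.mul_sum, ← Finset.mul_sum]
      rw [Finset.sum_ite_eq' s m (fun n => (Sav Ωs p k n)⁻¹ * (p j.1 / k m j.1)),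
        Finset.sum_ite_eq' s (m+1) (fun n => (Sav Ωs p k n)⁻¹ * (p j.1 / k (m+1) j.1))]
      rw [hKIKB _ (haI j.1 j.2), hKIKB _ (hbI j.1 j.2)]
      congr 2
      · simp only [hms]
      · simp only [hm1s]
    rw [tsum_congr hinner]
    -- split the tsum
    have hsum1 : Summable (fun j : Ωs =>
        if i < m then (Sav Ωs p k m)⁻¹ * (p j.1 / k m j.1) else 0) := by
      by_cases h : i < m
      · simpa [h] using (hsumk m (hmN m hm)).mul_left (Sav Ωs p k m)⁻¹
      · simp [h, summable_zero]
    have hsum2 : Summable (fun j : Ωs =>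
        if i ≤ m then (Sav Ωs p k (m+1))⁻¹ * (p j.1 / k (m+1) j.1) else 0) := by
      by_cases h : i ≤ m
      · simpa [h] using (hsumk (m+1) (hm1N m hm)).mul_left (Sav Ωs p k (m+1))⁻¹
      · simp [h, summable_zero]
    have hsum3 : Summable (fun j : Ωs =>
        p j.1 / k m j.1 * KB Ωs p k ι T i (aPt k d z m j.1) -
          p j.1 / k (m + 1) j.1 * KB Ωs p k ι T i (bPt k d z m j.1)) := by
      apply Summable.sub
      · exact hprod m (hmN m hm) _ (fun j hj =>
          KB_bound hρ0 hρ1 hp hι hT hA2 i _ (haI j hj))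
      · exact hprod (m+1) (hm1N m hm) _ (fun j hj =>
          KB_bound hρ0 hρ1 hp hι hT hA2 i _ (hbI j hj))
    rw [Summable.tsum_add (hsum1.sub hsum2) hsum3, Summable.tsum_sub hsum1 hsum2]
    have e1 : ∑' j : Ωs, (if i < m then (Sav Ωs p k m)⁻¹ * (p j.1 / k m j.1) else 0)
        = if i < m then (1:ℝ) else 0 := by
      by_cases h : i < m
      · simp only [h, if_true]
        rw [tsum_mul_left, ← Sav, inv_mul_cancel₀ (hS m (hmN m hm))]
      · simp [h]
    have e2 : ∑' j : Ωs, (if i ≤ m then (Sav Ωs p k (m+1))⁻¹ * (p j.1 / k (m+1) j.1) else 0)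
        = if i ≤ m then (1:ℝ) else 0 := by
      by_cases h : i ≤ m
      · simp only [h, if_true]
        rw [tsum_mul_left, ← Sav, inv_mul_cancel₀ (hS (m+1) (hm1N m hm))]
      · simp [h]
    rw [e1, e2, hQ]
    congr 1
    split_ifs with h1' h2' h3' h4' <;> first
      | (exfalso; omega)
      | norm_num
  -- Step 1/2 : the vanishing double sum
  have h0 : ∑ m ∈ t, γ m * ∑ n ∈ s, (Sav Ωs p k n)⁻¹ * fundM Ωs p k d ι z n m = 0 := by
    have : ∀ n ∈ s, (Sav Ωs p k n)⁻¹ * ∑ m ∈ t, fundM Ωs p k d ι z n m * γ m = 0 := by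
      intro n hn; rw [hγ n (hsub n hn), mul_zero]
    calc ∑ m ∈ t, γ m * ∑ n ∈ s, (Sav Ωs p k n)⁻¹ * fundM Ωs p k d ι z n m
        = ∑ m ∈ t, ∑ n ∈ s, γ m * ((Sav Ωs p k n)⁻¹ * fundM Ωs p k d ι z n m) := by
          exact Finset.sum_congr rfl fun m _ => Finset.mul_sum _ _ _
      _ = ∑ n ∈ s, ∑ m ∈ t, γ m * ((Sav Ωs p k n)⁻¹ * fundM Ωs p k d ι z n m) :=
          Finset.sum_comm
      _ = ∑ n ∈ s, (Sav Ωs p k n)⁻¹ * ∑ m ∈ t, fundM Ωs p k d ι z n m * γ m := by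
          refine Finset.sum_congr rfl fun n _ => ?_
          rw [Finset.mul_sum]
          exact Finset.sum_congr rfl fun m _ => by ring
      _ = 0 := Finset.sum_eq_zero this
  -- assemble
  rw [Finset.sum_congr rfl (fun m hm => by rw [step3 m hm])] at h0
  have hsplit : ∑ m ∈ t, γ m * ((if m = i then (-1:ℝ) else 0) + Q m)
      = (∑ m ∈ t, γ m * (if m = i then (-1:ℝ) else 0)) + ∑ m ∈ t, γ m * Q m := by
    rw [← Finset.sum_add_distrib]
    exact Finset.sum_congr rfl fun m _ => by ring
  rw [hsplit] at h0
  have hδ : ∑ m ∈ t, γ m * (if m = i then (-1:ℝ) else 0) = -γ i := by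
    have : ∀ m ∈ t, γ m * (if m = i then (-1:ℝ) else 0)
        = if m = i then -γ m else 0 := by
      intro m _; split_ifs <;> ring
    rw [Finset.sum_congr rfl this, Finset.sum_ite_eq' t i (fun m => -γ m), if_pos hi]
  rw [hδ] at h0
  have : ∑ m ∈ t, γ m * Q m = γ i := by linarith
  rw [hQ] at this
  rw [this]
  ring

end
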